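/- Let H be a real inner product space, let γ > 0 and r ≥ 0 be real numbers, and let T be a positive integer. Let θ_1, …, θ_{T+1} ∈ H, η_1, …, η_T ∈ H, and w_1, …, w_{T+1} ∈ H satisfy θ_{t+1} = θ_t − γ·η_t for all 1 ≤ t ≤ T, and ‖θ_t‖ ≤ r and ‖w_t‖ ≤ r for all 1 ≤ t ≤ T+1. Then Σ_{t=1}^{T} ⟨η_t, θ_t − w_t⟩ ≤ (2r²)/γ + (2r/γ)·Σ_{t=1}^{T} ‖w_t − w_{t+1}‖ + (γ/2)·Σ_{t=1}^{T} ‖η_t‖². -/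

import Mathlib

open scoped RealInnerProductSpace

/-- Telescoped form of the per-step OGD inequality: for iterates produced by online
gradient descent `θ (t+1) = θ t - γ • η t` and comparators `w t`, all contained in the
ball of radius `r`, the summed inner products are bounded by `2r²/γ + (2r/γ)·V + (γ/2)·Σ‖η‖²`. -/
theorem ogd_telescoped_inequality {H : Type*} [NormedAddCommGroup H] [InnerProductSpace ℝ H]
    (γ r : ℝ) (hγ : 0 < γ) (hr : 0 ≤ r) (T : ℕ) (hT : 0 < T)
    (θ η w : ℕ → H)
    (hupd : ∀ t, 1 ≤ t → t ≤ T → θ (t + 1) = θ t - γ • η t)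
    (hθ : ∀ t, 1 ≤ t → t ≤ T + 1 → ‖θ t‖ ≤ r)
    (hw : ∀ t, 1 ≤ t → t ≤ T + 1 → ‖w t‖ ≤ r) :
    ∑ t ∈ Finset.Icc 1 T, ⟪η t, θ t - w t⟫ ≤
      2 * r ^ 2 / γ + (2 * r / γ) * ∑ t ∈ Finset.Icc 1 T, ‖w t - w (t + 1)‖
        + (γ / 2) * ∑ t ∈ Finset.Icc 1 T, ‖η t‖ ^ 2 := by
  set a : ℕ → ℝ := fun t => ‖θ t - w t‖ ^ 2 with ha
  have h2γ : (0:ℝ) < 2 * γ := by linarith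
  have key : ∀ t ∈ Finset.Icc 1 T, ⟪η t, θ t - w t⟫ ≤
      (a t - a (t + 1)) / (2 * γ) + (2 * r / γ) * ‖w t - w (t + 1)‖
        + (γ / 2) * ‖η t‖ ^ 2 := by
    intro t ht
    rw [Finset.mem_Icc] at ht
    obtain ⟨h1, h2⟩ := ht
    have hexp : ‖θ (t + 1) - w t‖ ^ 2
        = ‖θ t - w t‖ ^ 2 - 2 * γ * ⟪η t, θ t - w t⟫ + γ ^ 2 * ‖η t‖ ^ 2 := by
      rw [hupd t h1 h2]
      have hre : θ t - γ • η t - w t = (θ t - w t) - γ • η t := by abel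
      rw [hre, @norm_sub_sq_real, real_inner_smul_right, norm_smul,
        Real.norm_eq_abs, mul_pow, sq_abs, real_inner_comm]
      ring
    have hdrop : a (t + 1) ≤ ‖θ (t + 1) - w t‖ ^ 2 + 4 * r * ‖w t - w (t + 1)‖ := by
      have hb : ‖θ (t + 1) - w (t + 1)‖ ≤ ‖θ (t + 1) - w t‖ + ‖w t - w (t + 1)‖ := by
        have : θ (t + 1) - w (t + 1) = (θ (t + 1) - w t) + (w t - w (t + 1)) := by abel
        rw [this]; exact norm_add_le _ _
      have hθ1 : ‖θ (t + 1)‖ ≤ r := hθ (t + 1) (by omega) (by omega)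
      have hw1 : ‖w (t + 1)‖ ≤ r := hw (t + 1) (by omega) (by omega)
      have hw0 : ‖w t‖ ≤ r := hw t h1 (by omega)
      have hbr : ‖θ (t + 1) - w (t + 1)‖ ≤ 2 * r :=
        le_trans (norm_sub_le _ _) (by linarith)
      have hcr : ‖θ (t + 1) - w t‖ ≤ 2 * r :=
        le_trans (norm_sub_le _ _) (by linarith)
      have hc0 : (0:ℝ) ≤ ‖θ (t + 1) - w t‖ := norm_nonneg _
      have hd0 : (0:ℝ) ≤ ‖w t - w (t + 1)‖ := norm_nonneg _
      have hb0 : (0:ℝ) ≤ ‖θ (t + 1) - w (t + 1)‖ := norm_nonneg _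
      simp only [ha]
      rcases le_or_gt ‖θ (t + 1) - w (t + 1)‖ ‖θ (t + 1) - w t‖ with h | h
      · nlinarith
      · have hA : ‖θ (t + 1) - w (t + 1)‖ - ‖θ (t + 1) - w t‖ ≤ ‖w t - w (t + 1)‖ := by
          linarith
        have hB : ‖θ (t + 1) - w (t + 1)‖ + ‖θ (t + 1) - w t‖ ≤ 4 * r := by linarith
        nlinarith [mul_le_mul hA hB (by linarith) hd0]
    have hmul : 2 * γ * ⟪η t, θ t - w t⟫
        ≤ a t - a (t + 1) + 4 * r * ‖w t - w (t + 1)‖ + γ ^ 2 * ‖η t‖ ^ 2 := by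
      simp only [ha] at hdrop ⊢
      nlinarith [hexp, hdrop]
    have hrw : (a t - a (t + 1)) / (2 * γ) + (2 * r / γ) * ‖w t - w (t + 1)‖
        + (γ / 2) * ‖η t‖ ^ 2
        = (a t - a (t + 1) + 4 * r * ‖w t - w (t + 1)‖ + γ ^ 2 * ‖η t‖ ^ 2) / (2 * γ) := by
      field_simp; ring
    rw [hrw, le_div_iff₀ h2γ]
    nlinarith [hmul]
  have htel : ∑ t ∈ Finset.Icc 1 T, (a t - a (t + 1)) = a 1 - a (T + 1) := by
    rw [show Finset.Icc 1 T = Finset.Ico 1 (T + 1) from (Finset.Ico_add_one_right_eq_Icc 1 T).symm,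
      Finset.sum_Ico_eq_sum_range]
    exact (Finset.sum_range_sub' (fun i => a (1 + i)) T).trans (by rw [Nat.add_comm 1 T])
  have ha1 : a 1 ≤ 4 * r ^ 2 := by
    have hθ1 : ‖θ 1‖ ≤ r := hθ 1 (by omega) (by omega)
    have hw1 : ‖w 1‖ ≤ r := hw 1 (by omega) (by omega)
    have : ‖θ 1 - w 1‖ ≤ 2 * r := le_trans (norm_sub_le _ _) (by linarith)
    simp only [ha]
    nlinarith [norm_nonneg (θ 1 - w 1)]
  have haT : 0 ≤ a (T + 1) := sq_nonneg _
  calc ∑ t ∈ Finset.Icc 1 T, ⟪η t, θ t - w t⟫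
      ≤ ∑ t ∈ Finset.Icc 1 T, ((a t - a (t + 1)) / (2 * γ)
          + (2 * r / γ) * ‖w t - w (t + 1)‖ + (γ / 2) * ‖η t‖ ^ 2) :=
        Finset.sum_le_sum key
    _ = (∑ t ∈ Finset.Icc 1 T, (a t - a (t + 1))) / (2 * γ)
          + (2 * r / γ) * ∑ t ∈ Finset.Icc 1 T, ‖w t - w (t + 1)‖
          + (γ / 2) * ∑ t ∈ Finset.Icc 1 T, ‖η t‖ ^ 2 := by
        rw [Finset.sum_add_distrib, Finset.sum_add_distrib, ← Finset.sum_div,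
          ← Finset.mul_sum, ← Finset.mul_sum]
    _ ≤ 2 * r ^ 2 / γ + (2 * r / γ) * ∑ t ∈ Finset.Icc 1 T, ‖w t - w (t + 1)‖
          + (γ / 2) * ∑ t ∈ Finset.Icc 1 T, ‖η t‖ ^ 2 := by
        rw [htel]
        have : (a 1 - a (T + 1)) / (2 * γ) ≤ 2 * r ^ 2 / γ := by
          rw [div_le_div_iff₀ h2γ hγ]
          nlinarith
        linarith
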